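/- arXiv:2103.13441 — 4 statements merged into one kernel-verified Lean document; each statement's English description precedes it below -/
import Mathlib

section
/- For all real numbers ρ and η with 0 < ρ < 1 and η > 0, the double series Σ_{s=0}^{∞} ρ^s · Σ_{i=1}^{s} (1/(η+1))^i converges, and 2·( ρ/(1−ρ) − (1−ρ)·Σ_{s=0}^{∞} ρ^s · Σ_{i=1}^{s} (1/(η+1))^i ) = 2·(ρ/(1−ρ))·(η/(η+1−ρ)). -/
/-- The series evaluation at the core of Proposition 2: for `0 < ρ < 1` and `η > 0`,
the double series `Σ_s ρ^s Σ_{i=1}^s (1/(η+1))^i` converges and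
`2(ρ/(1-ρ) - (1-ρ)·Σ) = 2(ρ/(1-ρ))(η/(η+1-ρ))`. -/
theorem stmt_2 (ρ η : ℝ) (hρ0 : 0 < ρ) (hρ1 : ρ < 1) (hη : 0 < η) :
    Summable (fun s : ℕ => ρ ^ s * ∑ i ∈ Finset.Icc 1 s, (1 / (η + 1)) ^ i) ∧
    2 * (ρ / (1 - ρ) -
        (1 - ρ) * ∑' s : ℕ, ρ ^ s * ∑ i ∈ Finset.Icc 1 s, (1 / (η + 1)) ^ i)
      = 2 * (ρ / (1 - ρ)) * (η / (η + 1 - ρ)) := by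
  set q : ℝ := 1 / (η + 1) with hq
  have hη1 : (0:ℝ) < η + 1 := by linarith
  have hq0 : 0 < q := by positivity
  have hq1 : q < 1 := by
    rw [hq, div_lt_one hη1]; linarith
  have h1q : (1:ℝ) - q ≠ 0 := by linarith
  have hρq1 : ρ * q < 1 := by nlinarith
  have hρq0 : 0 < ρ * q := by positivity
  set c : ℝ := q / (1 - q) with hc
  have hIcc : ∀ s : ℕ, ∑ i ∈ Finset.Icc 1 s, q ^ i = c * (1 - q ^ s) := by
    intro s
    induction s with
    | zero => simp
    | succ n ih =>
      rw [Finset.sum_Icc_succ_top (by omega), ih, hc]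
      field_simp
      ring
  have hterm : ∀ s : ℕ, ρ ^ s * ∑ i ∈ Finset.Icc 1 s, q ^ i
      = c * ρ ^ s - c * (ρ * q) ^ s := by
    intro s
    rw [hIcc, mul_pow]; ring
  have hsum1 : Summable (fun s : ℕ => c * ρ ^ s) :=
    (summable_geometric_of_lt_one hρ0.le hρ1).mul_left c
  have hsum2 : Summable (fun s : ℕ => c * (ρ * q) ^ s) :=
    (summable_geometric_of_lt_one hρq0.le hρq1).mul_left c
  have hS : Summable (fun s : ℕ => ρ ^ s * ∑ i ∈ Finset.Icc 1 s, q ^ i) := by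
    simpa only [hterm] using hsum1.sub hsum2
  refine ⟨hS, ?_⟩
  have htsum : (∑' s : ℕ, ρ ^ s * ∑ i ∈ Finset.Icc 1 s, q ^ i)
      = c * (1 - ρ)⁻¹ - c * (1 - ρ * q)⁻¹ := by
    calc (∑' s : ℕ, ρ ^ s * ∑ i ∈ Finset.Icc 1 s, q ^ i)
        = ∑' s : ℕ, (c * ρ ^ s - c * (ρ * q) ^ s) := by
          exact tsum_congr hterm
      _ = (∑' s : ℕ, c * ρ ^ s) - ∑' s : ℕ, c * (ρ * q) ^ s :=
          Summable.tsum_sub hsum1 hsum2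
      _ = c * (1 - ρ)⁻¹ - c * (1 - ρ * q)⁻¹ := by
          rw [tsum_mul_left, tsum_mul_left,
            tsum_geometric_of_lt_one hρ0.le hρ1,
            tsum_geometric_of_lt_one hρq0.le hρq1]
  rw [htsum, hc, hq]
  have h1 : (1:ℝ) - ρ ≠ 0 := by linarith
  have h2 : (1:ℝ) - ρ * (1/(η+1)) ≠ 0 := by
    rw [← hq]; linarith
  have h3 : η + 1 - ρ ≠ 0 := by linarith
  have h4 : (η:ℝ) + 1 ≠ 0 := by linarith
  have h5 : (1:ℝ) - 1/(η+1) ≠ 0 := by rw [← hq]; exact h1q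
  have h6 : η ≠ 0 := hη.ne'
  field_simp
  ring_nf
  simp only [mul_inv_cancel_right₀ h6]
  ring
end

section
/- Define F(λ, μ, α) = 2·λ²·α / ((μ−λ)·(α+μ−λ)) for 0 < λ < μ and α > 0. Then: (i) for each fixed μ > 0 and α > 0, the map λ ↦ F(λ, μ, α) is strictly increasing and convex on (0, μ); (ii) for each fixed λ > 0 and α > 0, the map μ ↦ F(λ, μ, α) is strictly decreasing and convex on (λ, ∞); (iii) for each fixed 0 < λ < μ, the map α ↦ F(λ, μ, α) is strictly increasing and concave on (0, ∞). -/
open Set Filter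

private lemma aux_deriv_eq {s : Set ℝ} (hs : IsOpen s) {f g : ℝ → ℝ}
    (hd1 : ∀ x ∈ s, HasDerivAt f (g x) x) {x : ℝ} (hx : x ∈ s) :
    deriv f =ᶠ[nhds x] g :=
  Filter.eventuallyEq_of_mem (hs.mem_nhds hx) (fun y hy => (hd1 y hy).deriv)

private lemma aux_mono {s : Set ℝ} (hs : IsOpen s) (hc : Convex ℝ s) {f g : ℝ → ℝ}
    (hd1 : ∀ x ∈ s, HasDerivAt f (g x) x) (hg : ∀ x ∈ s, 0 < g x) :
    StrictMonoOn f s := by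
  apply strictMonoOn_of_deriv_pos hc
  · exact fun x hx => (hd1 x hx).continuousAt.continuousWithinAt
  · intro x hx
    rw [hs.interior_eq] at hx
    rw [(hd1 x hx).deriv]
    exact hg x hx

private lemma aux_anti {s : Set ℝ} (hs : IsOpen s) (hc : Convex ℝ s) {f g : ℝ → ℝ}
    (hd1 : ∀ x ∈ s, HasDerivAt f (g x) x) (hg : ∀ x ∈ s, g x < 0) :
    StrictAntiOn f s := by
  apply strictAntiOn_of_deriv_neg hc
  · exact fun x hx => (hd1 x hx).continuousAt.continuousWithinAt
  · intro x hx
    rw [hs.interior_eq] at hx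
    rw [(hd1 x hx).deriv]
    exact hg x hx

private lemma aux_iter2 {s : Set ℝ} (hs : IsOpen s) {f g h : ℝ → ℝ}
    (hd1 : ∀ x ∈ s, HasDerivAt f (g x) x)
    (hd2 : ∀ x ∈ s, HasDerivAt g (h x) x) {x : ℝ} (hx : x ∈ s) :
    deriv^[2] f x = h x := by
  have hev := aux_deriv_eq hs hd1 hx
  have h1 : deriv (deriv f) x = deriv g x := hev.deriv_eq
  simp only [Function.iterate_succ, Function.iterate_zero, Function.comp_apply, id_eq]
  rw [h1, (hd2 x hx).deriv]

private lemma aux_convex {s : Set ℝ} (hs : IsOpen s) (hc : Convex ℝ s) {f g h : ℝ → ℝ}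
    (hd1 : ∀ x ∈ s, HasDerivAt f (g x) x)
    (hd2 : ∀ x ∈ s, HasDerivAt g (h x) x)
    (hh : ∀ x ∈ s, 0 ≤ h x) : ConvexOn ℝ s f := by
  apply convexOn_of_deriv2_nonneg hc
  · exact fun x hx => (hd1 x hx).continuousAt.continuousWithinAt
  · intro x hx
    rw [hs.interior_eq] at hx
    exact (hd1 x hx).differentiableAt.differentiableWithinAt
  · intro x hx
    rw [hs.interior_eq] at hx
    exact ((hd2 x hx).differentiableAt.congr_of_eventuallyEq
      (aux_deriv_eq hs hd1 hx)).differentiableWithinAt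
  · intro x hx
    rw [hs.interior_eq] at hx
    rw [aux_iter2 hs hd1 hd2 hx]
    exact hh x hx

private lemma aux_concave {s : Set ℝ} (hs : IsOpen s) (hc : Convex ℝ s) {f g h : ℝ → ℝ}
    (hd1 : ∀ x ∈ s, HasDerivAt f (g x) x)
    (hd2 : ∀ x ∈ s, HasDerivAt g (h x) x)
    (hh : ∀ x ∈ s, h x ≤ 0) : ConcaveOn ℝ s f := by
  apply concaveOn_of_deriv2_nonpos hc
  · exact fun x hx => (hd1 x hx).continuousAt.continuousWithinAt
  · intro x hx
    rw [hs.interior_eq] at hx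
    exact (hd1 x hx).differentiableAt.differentiableWithinAt
  · intro x hx
    rw [hs.interior_eq] at hx
    exact ((hd2 x hx).differentiableAt.congr_of_eventuallyEq
      (aux_deriv_eq hs hd1 hx)).differentiableWithinAt
  · intro x hx
    rw [hs.interior_eq] at hx
    rw [aux_iter2 hs hd1 hd2 hx]
    exact hh x hx

/-- For `F(λ,μ,α) = 2λ²α/((μ-λ)(α+μ-λ))`: (i) `λ ↦ F` is strictly increasing and convex
on `(0,μ)`; (ii) `μ ↦ F` is strictly decreasing and convex on `(λ,∞)`; (iii) `α ↦ F` is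
strictly increasing and concave on `(0,∞)`. -/
theorem stmt_6 (F : ℝ → ℝ → ℝ → ℝ)
    (hF : ∀ lam μ α : ℝ, F lam μ α = 2 * lam ^ 2 * α / ((μ - lam) * (α + μ - lam))) :
    (∀ μ α : ℝ, 0 < μ → 0 < α →
      StrictMonoOn (fun lam => F lam μ α) (Set.Ioo 0 μ) ∧
      ConvexOn ℝ (Set.Ioo 0 μ) (fun lam => F lam μ α)) ∧
    (∀ lam α : ℝ, 0 < lam → 0 < α →
      StrictAntiOn (fun μ => F lam μ α) (Set.Ioi lam) ∧
      ConvexOn ℝ (Set.Ioi lam) (fun μ => F lam μ α)) ∧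
    (∀ lam μ : ℝ, 0 < lam → lam < μ →
      StrictMonoOn (fun α => F lam μ α) (Set.Ioi 0) ∧
      ConcaveOn ℝ (Set.Ioi 0) (fun α => F lam μ α)) := by
  refine ⟨?_, ?_, ?_⟩
  · -- Part (i): in λ on (0, μ)
    intro μ α hμ hα
    simp only [hF]
    set g : ℝ → ℝ := fun l => 2*μ^2/(μ-l)^2 - 2*(μ+α)^2/(α+μ-l)^2 with hgdef
    set h : ℝ → ℝ := fun l => 4*μ^2/(μ-l)^3 - 4*(μ+α)^2/(α+μ-l)^3 with hhdef
    have hd1 : ∀ x ∈ Set.Ioo (0:ℝ) μ,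
        HasDerivAt (fun lam => 2 * lam ^ 2 * α / ((μ - lam) * (α + μ - lam))) (g x) x := by
      intro x hx
      obtain ⟨hx0, hxμ⟩ := hx
      have hu : (0:ℝ) < μ - x := by linarith
      have hv : (0:ℝ) < α + μ - x := by linarith
      have hnum : HasDerivAt (fun l : ℝ => 2 * l ^ 2 * α) (4*x*α) x := by
        have := ((hasDerivAt_pow 2 x).const_mul 2).mul_const α
        refine this.congr_deriv ?_
        push_cast
        ring
      have hden : HasDerivAt (fun l : ℝ => (μ - l) * (α + μ - l))
          ((-1)*(α+μ-x) + (μ-x)*(-1)) x :=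
        ((hasDerivAt_id x).const_sub μ).mul ((hasDerivAt_id x).const_sub (α+μ))
      have := hnum.div hden (by positivity)
      refine this.congr_deriv ?_
      simp only [hgdef]
      field_simp
      ring
    have hd2 : ∀ x ∈ Set.Ioo (0:ℝ) μ, HasDerivAt g (h x) x := by
      intro x hx
      obtain ⟨hx0, hxμ⟩ := hx
      have hu : (0:ℝ) < μ - x := by linarith
      have hv : (0:ℝ) < α + μ - x := by linarith
      have h1 : HasDerivAt (fun l : ℝ => 2*μ^2/(μ-l)^2)
          ((0*(μ-x)^2 - 2*μ^2*(2*(μ-x)^(2-1)*(-1)))/((μ-x)^2)^2) x :=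
        (hasDerivAt_const x (2*μ^2)).div (((hasDerivAt_id x).const_sub μ).pow 2)
          (by positivity)
      have h2 : HasDerivAt (fun l : ℝ => 2*(μ+α)^2/(α+μ-l)^2)
          ((0*(α+μ-x)^2 - 2*(μ+α)^2*(2*(α+μ-x)^(2-1)*(-1)))/((α+μ-x)^2)^2) x :=
        (hasDerivAt_const x (2*(μ+α)^2)).div (((hasDerivAt_id x).const_sub (α+μ)).pow 2)
          (by positivity)
      have := h1.sub h2
      refine this.congr_deriv ?_
      simp only [hhdef]
      field_simp
      ring
    have key : ∀ x ∈ Set.Ioo (0:ℝ) μ, (μ+α)*(μ-x) < μ*(α+μ-x) := by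
      intro x hx
      obtain ⟨hx0, hxμ⟩ := hx
      nlinarith [mul_pos hα hx0]
    have hg : ∀ x ∈ Set.Ioo (0:ℝ) μ, 0 < g x := by
      intro x hx
      have hk := key x hx
      obtain ⟨hx0, hxμ⟩ := hx
      have hu : (0:ℝ) < μ - x := by linarith
      have hv : (0:ℝ) < α + μ - x := by linarith
      have h2 : ((μ+α)*(μ-x))^2 < (μ*(α+μ-x))^2 :=
        pow_lt_pow_left₀ hk (by positivity) two_ne_zero
      simp only [hgdef]
      rw [sub_pos, div_lt_div_iff₀ (by positivity) (by positivity)]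
      nlinarith [h2]
    have hh : ∀ x ∈ Set.Ioo (0:ℝ) μ, 0 ≤ h x := by
      intro x hx
      have hk := key x hx
      obtain ⟨hx0, hxμ⟩ := hx
      have hu : (0:ℝ) < μ - x := by linarith
      have hv : (0:ℝ) < α + μ - x := by linarith
      have h2 : ((μ+α)*(μ-x))^2 < (μ*(α+μ-x))^2 :=
        pow_lt_pow_left₀ hk (by positivity) two_ne_zero
      simp only [hhdef]
      rw [sub_nonneg, div_le_div_iff₀ (by positivity) (by positivity)]
      have e1 : ((μ+α)*(μ-x))^2 * (μ-x) ≤ ((μ+α)*(μ-x))^2 * (α+μ-x) := by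
        nlinarith [sq_nonneg ((μ+α)*(μ-x))]
      have e2 : ((μ+α)*(μ-x))^2 * (α+μ-x) ≤ (μ*(α+μ-x))^2 * (α+μ-x) := by
        nlinarith [h2]
      nlinarith [e1, e2]
    exact ⟨aux_mono isOpen_Ioo (convex_Ioo _ _) hd1 hg,
      aux_convex isOpen_Ioo (convex_Ioo _ _) hd1 hd2 hh⟩
  · -- Part (ii): in μ on (lam, ∞)
    intro lam α hlam hα
    simp only [hF]
    set g : ℝ → ℝ := fun m => 2*lam^2/(α+m-lam)^2 - 2*lam^2/(m-lam)^2 with hgdef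
    set h : ℝ → ℝ := fun m => 4*lam^2/(m-lam)^3 - 4*lam^2/(α+m-lam)^3 with hhdef
    have hd1 : ∀ x ∈ Set.Ioi lam,
        HasDerivAt (fun μ => 2 * lam ^ 2 * α / ((μ - lam) * (α + μ - lam))) (g x) x := by
      intro x hx
      have hu : (0:ℝ) < x - lam := by simpa [sub_pos] using hx
      have hv : (0:ℝ) < α + x - lam := by linarith
      have hden : HasDerivAt (fun m : ℝ => (m - lam) * (α + m - lam))
          (1*(α+x-lam) + (x-lam)*1) x :=
        ((hasDerivAt_id x).sub_const lam).mul
          (((hasDerivAt_id x).const_add α).sub_const lam)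
      have := (hasDerivAt_const x (2*lam^2*α)).div hden (by positivity)
      refine this.congr_deriv ?_
      simp only [hgdef]
      field_simp
      ring
    have hd2 : ∀ x ∈ Set.Ioi lam, HasDerivAt g (h x) x := by
      intro x hx
      have hu : (0:ℝ) < x - lam := by simpa [sub_pos] using hx
      have hv : (0:ℝ) < α + x - lam := by linarith
      have h1 : HasDerivAt (fun m : ℝ => 2*lam^2/(α+m-lam)^2)
          ((0*(α+x-lam)^2 - 2*lam^2*(2*(α+x-lam)^(2-1)*1))/((α+x-lam)^2)^2) x :=
        (hasDerivAt_const x (2*lam^2)).div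
          ((((hasDerivAt_id x).const_add α).sub_const lam).pow 2) (by positivity)
      have h2 : HasDerivAt (fun m : ℝ => 2*lam^2/(m-lam)^2)
          ((0*(x-lam)^2 - 2*lam^2*(2*(x-lam)^(2-1)*1))/((x-lam)^2)^2) x :=
        (hasDerivAt_const x (2*lam^2)).div
          (((hasDerivAt_id x).sub_const lam).pow 2) (by positivity)
      have := h1.sub h2
      refine this.congr_deriv ?_
      simp only [hhdef]
      field_simp
      ring
    have hg : ∀ x ∈ Set.Ioi lam, g x < 0 := by
      intro x hx
      have hu : (0:ℝ) < x - lam := by simpa [sub_pos] using hx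
      have hv : (0:ℝ) < α + x - lam := by linarith
      simp only [hgdef]
      rw [sub_neg, div_lt_div_iff₀ (by positivity) (by positivity)]
      have : (x-lam)^2 < (α+x-lam)^2 := by nlinarith
      nlinarith [mul_pos hlam hlam, this, sq_nonneg lam, mul_pos hu hv]
    have hh : ∀ x ∈ Set.Ioi lam, 0 ≤ h x := by
      intro x hx
      have hu : (0:ℝ) < x - lam := by simpa [sub_pos] using hx
      have hv : (0:ℝ) < α + x - lam := by linarith
      simp only [hhdef]
      rw [sub_nonneg, div_le_div_iff₀ (by positivity) (by positivity)]
      have hcube : (x-lam)^3 ≤ (α+x-lam)^3 :=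
        pow_le_pow_left₀ hu.le (by linarith) 3
      nlinarith [hcube, sq_nonneg lam]
    exact ⟨aux_anti isOpen_Ioi (convex_Ioi _) hd1 hg,
      aux_convex isOpen_Ioi (convex_Ioi _) hd1 hd2 hh⟩
  · -- Part (iii): in α on (0, ∞)
    intro lam μ hlam hlm
    simp only [hF]
    set g : ℝ → ℝ := fun a => 2*lam^2/(a+μ-lam)^2 with hgdef
    set h : ℝ → ℝ := fun a => -(4*lam^2/(a+μ-lam)^3) with hhdef
    have hu : (0:ℝ) < μ - lam := by linarith
    have hd1 : ∀ x ∈ Set.Ioi (0:ℝ),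
        HasDerivAt (fun α => 2 * lam ^ 2 * α / ((μ - lam) * (α + μ - lam))) (g x) x := by
      intro x hx
      have hx0 : (0:ℝ) < x := hx
      have hv : (0:ℝ) < x + μ - lam := by linarith
      have hnum : HasDerivAt (fun a : ℝ => 2 * lam ^ 2 * a) (2*lam^2*1) x :=
        (hasDerivAt_id x).const_mul (2*lam^2)
      have hden : HasDerivAt (fun a : ℝ => (μ - lam) * (a + μ - lam)) ((μ-lam)*1) x :=
        (((hasDerivAt_id x).add_const μ).sub_const lam).const_mul (μ-lam)
      have := hnum.div hden (by positivity)
      refine this.congr_deriv ?_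
      simp only [hgdef]
      field_simp
      ring
    have hd2 : ∀ x ∈ Set.Ioi (0:ℝ), HasDerivAt g (h x) x := by
      intro x hx
      have hx0 : (0:ℝ) < x := hx
      have hv : (0:ℝ) < x + μ - lam := by linarith
      have h1 : HasDerivAt (fun a : ℝ => 2*lam^2/(a+μ-lam)^2)
          ((0*(x+μ-lam)^2 - 2*lam^2*(2*(x+μ-lam)^(2-1)*1))/((x+μ-lam)^2)^2) x :=
        (hasDerivAt_const x (2*lam^2)).div
          ((((hasDerivAt_id x).add_const μ).sub_const lam).pow 2) (by positivity)
      refine h1.congr_deriv ?_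
      simp only [hhdef]
      field_simp
      ring
    have hg : ∀ x ∈ Set.Ioi (0:ℝ), 0 < g x := by
      intro x hx
      have hx0 : (0:ℝ) < x := hx
      have hv : (0:ℝ) < x + μ - lam := by linarith
      simp only [hgdef]
      positivity
    have hh : ∀ x ∈ Set.Ioi (0:ℝ), h x ≤ 0 := by
      intro x hx
      have hx0 : (0:ℝ) < x := hx
      have hv : (0:ℝ) < x + μ - lam := by linarith
      simp only [hhdef]
      have : (0:ℝ) ≤ 4*lam^2/(x+μ-lam)^3 := by positivity
      linarith
    exact ⟨aux_mono isOpen_Ioi (convex_Ioi _) hd1 hg,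
      aux_concave isOpen_Ioi (convex_Ioi _) hd1 hd2 hh⟩
end

section
/- Let c ≥ 2 and m ≥ 1 be integers, and let μ > 0, α > 0 with η = α/μ. Let Y, X, Z be mutually independent random variables where Y has the Gamma distribution with shape m and rate (c−1)μ, and X and Z each have the exponential distribution with rate μ. Then E[ exp(−α · min(Y + X, Z)) ] = ( η·((c−1)/(η+c))^m + η + 2 ) / (η² + 3η + 2). -/
open MeasureTheory ProbabilityTheory Real Set
open scoped ENNReal NNReal

lemma aux_exp_Ioi {c : ℝ} (hc : 0 < c) (t : ℝ) :
    ∫ x in Ioi t, Real.exp (-(c*x)) = Real.exp (-(c*t))/c := by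
  have h := integral_comp_mul_left_Ioi (fun x => Real.exp (-x)) t hc
  simp only [smul_eq_mul] at h
  rw [h, integral_exp_neg_Ioi]
  ring

lemma aux_exp_Ioc {c : ℝ} (hc : 0 < c) (t : ℝ) :
    ∫ x in (0:ℝ)..t, Real.exp (-(c*x)) = (1 - Real.exp (-(c*t)))/c := by
  have h := intervalIntegral.integral_comp_mul_left (fun x => Real.exp (-x)) hc.ne'
    (a := 0) (b := t)
  simp only [smul_eq_mul] at h
  rw [h, intervalIntegral.integral_comp_neg (fun x => Real.exp x), integral_exp]
  simp [mul_comm]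
  ring

lemma gamma_integral_pdf {a r : ℝ} (ha : 0 < a) (hr : 0 < r) (g : ℝ → ℝ) :
    ∫ x, g x ∂(gammaMeasure a r) = ∫ x, gammaPDFReal a r x * g x := by
  rw [gammaMeasure]
  have h : gammaPDF a r = fun x => ((gammaPDFReal a r x).toNNReal : ℝ≥0∞) := rfl
  rw [h, integral_withDensity_eq_integral_smul ((measurable_gammaPDFReal a r).real_toNNReal)]
  congr 1 with x
  rw [NNReal.smul_def, Real.coe_toNNReal _ (gammaPDFReal_nonneg ha hr x), smul_eq_mul]

lemma gamma_integral_Ioi {a r : ℝ} (ha : 0 < a) (hr : 0 < r) (g : ℝ → ℝ) :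
    ∫ x, g x ∂(gammaMeasure a r)
      = ∫ x in Ioi 0, r ^ a / Real.Gamma a * x ^ (a - 1) * Real.exp (-(r*x)) * g x := by
  rw [gamma_integral_pdf ha hr]
  rw [← setIntegral_eq_integral_of_forall_compl_eq_zero
    (s := Ici (0:ℝ)) (fun x hx => by
      simp only [mem_Ici, not_le] at hx
      simp [gammaPDFReal, not_le.mpr hx]),
    integral_Ici_eq_integral_Ioi]
  refine setIntegral_congr_fun measurableSet_Ioi (fun x hx => ?_)
  rw [gammaPDFReal, if_pos (le_of_lt hx)]

lemma gamma_mgf {r b : ℝ} (m : ℕ) (hm : 1 ≤ m) (hr : 0 < r) (hb : 0 ≤ b) :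
    ∫ x, Real.exp (-(b*x)) ∂(gammaMeasure m r) = (r/(r+b))^m := by
  have hma : (0:ℝ) < (m:ℝ) := by exact_mod_cast hm
  have hrb : 0 < r + b := by linarith
  have hΓ : Real.Gamma m ≠ 0 := (Real.Gamma_pos_of_pos hma).ne'
  rw [gamma_integral_Ioi hma hr]
  have hcong : ∀ x ∈ Ioi (0:ℝ),
      r ^ (m:ℝ) / Real.Gamma m * x ^ ((m:ℝ) - 1) * Real.exp (-(r*x)) * Real.exp (-(b*x))
        = r ^ (m:ℝ) / Real.Gamma m * (x ^ ((m:ℝ) - 1) * Real.exp (-((r+b)*x))) := by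
    intro x _
    rw [mul_assoc, ← Real.exp_add, show -(r*x) + -(b*x) = -((r+b)*x) by ring, mul_assoc]
  rw [setIntegral_congr_fun measurableSet_Ioi hcong, integral_const_mul,
    integral_rpow_mul_exp_neg_mul_Ioi hma hrb]
  rw [Real.rpow_natCast, Real.rpow_natCast, div_pow, div_pow]
  field_simp
  exact one_pow m

lemma exp_mgf {r b : ℝ} (hr : 0 < r) (hb : 0 ≤ b) :
    ∫ x, Real.exp (-(b*x)) ∂(expMeasure r) = r/(r+b) := by
  have h := gamma_mgf 1 le_rfl hr hb
  simpa [expMeasure] using h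

lemma inner_int {μ α t : ℝ} (hμ : 0 < μ) (hα : 0 < α) (ht : 0 ≤ t) :
    ∫ z, Real.exp (-α * min t z) ∂(expMeasure μ)
      = μ/(α+μ) + α/(α+μ) * Real.exp (-((α+μ)*t)) := by
  have h1 : ∫ z, Real.exp (-α * min t z) ∂(expMeasure μ)
      = ∫ z in Ioi 0, μ * Real.exp (-(μ*z)) * Real.exp (-α * min t z) := by
    rw [expMeasure, gamma_integral_Ioi one_pos hμ]
    refine setIntegral_congr_fun measurableSet_Ioi (fun x _ => ?_)
    norm_num
  rw [h1, ← Ioc_union_Ioi_eq_Ioi ht,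
    setIntegral_union (Ioc_disjoint_Ioi le_rfl) measurableSet_Ioi ?_ ?_]
  · have h2 : ∫ z in Ioc 0 t, μ * Real.exp (-(μ*z)) * Real.exp (-α * min t z)
        = μ * ((1 - Real.exp (-((μ+α)*t)))/(μ+α)) := by
      rw [← intervalIntegral.integral_of_le ht]
      have : ∀ z ∈ Set.uIcc (0:ℝ) t, μ * Real.exp (-(μ*z)) * Real.exp (-α * min t z)
          = μ * Real.exp (-((μ+α)*z)) := by
        intro z hz
        rw [Set.uIcc_of_le ht, mem_Icc] at hz
        rw [min_eq_right hz.2, mul_assoc, ← Real.exp_add,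
          show -(μ*z) + -α*z = -((μ+α)*z) by ring]
      rw [intervalIntegral.integral_congr this, intervalIntegral.integral_const_mul,
        aux_exp_Ioc (by linarith : (0:ℝ) < μ + α)]
    have h3 : ∫ z in Ioi t, μ * Real.exp (-(μ*z)) * Real.exp (-α * min t z)
        = Real.exp (-((α+μ)*t)) := by
      have : ∀ z ∈ Ioi t, μ * Real.exp (-(μ*z)) * Real.exp (-α * min t z)
          = (μ * Real.exp (-(α*t))) * Real.exp (-(μ*z)) := by
        intro z hz
        rw [min_eq_left (le_of_lt hz)]
        ring_nf
      rw [setIntegral_congr_fun measurableSet_Ioi this, integral_const_mul,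
        aux_exp_Ioi hμ, show -((α+μ)*t) = -(α*t) + -(μ*t) by ring, Real.exp_add]
      field_simp
    rw [h2, h3]
    have hαμ : α + μ ≠ 0 := by positivity
    have hμα : μ + α ≠ 0 := by positivity
    have he : Real.exp (-((μ+α)*t)) = Real.exp (-((α+μ)*t)) := by ring_nf
    rw [he]
    field_simp
    ring
  · exact Continuous.integrableOn_Ioc (by fun_prop)
  · have h4 : IntegrableOn (fun z : ℝ => Real.exp (-μ * z)) (Ioi t) :=
      exp_neg_integrableOn_Ioi t hμ
    have h5 : IntegrableOn (fun z : ℝ => (μ * Real.exp (-(α*t))) * Real.exp (-μ * z)) (Ioi t) :=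
      h4.const_mul _
    refine h5.congr_fun (fun z hz => ?_) measurableSet_Ioi
    rw [min_eq_left (le_of_lt hz)]
    ring_nf

lemma gammaMeasure_Iio_zero (a r : ℝ) : gammaMeasure a r (Iio 0) = 0 := by
  rw [gammaMeasure, withDensity_apply _ measurableSet_Iio]
  exact lintegral_gammaPDF_of_nonpos le_rfl

lemma ae_nonneg_of_gamma_law {Ω : Type*} [MeasureSpace Ω] {W : Ω → ℝ} (hW : Measurable W)
    {a r : ℝ} (hlaw : Measure.map W ℙ = gammaMeasure a r) : ∀ᵐ ω, 0 ≤ W ω := by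
  rw [ae_iff]
  have h : {ω | ¬ 0 ≤ W ω} = W ⁻¹' (Iio 0) := by ext ω; simp [not_le]
  rw [h, ← Measure.map_apply hW measurableSet_Iio, hlaw, gammaMeasure_Iio_zero]

/-- For mutually independent `Y ~ Erlang(m, (c-1)μ)`, `X ~ Exp(μ)`, `Z ~ Exp(μ)` and
`η = α/μ`, one has `E[exp(-α·min(Y+X, Z))] = (η((c-1)/(η+c))^m + η + 2)/(η²+3η+2)`. -/
theorem stmt_8 {Ω : Type*} [MeasureSpace Ω] [IsProbabilityMeasure (ℙ : Measure Ω)]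
    (c m : ℕ) (hc : 2 ≤ c) (hm : 1 ≤ m) (μ α η : ℝ) (hμ : 0 < μ) (hα : 0 < α)
    (hη : η = α / μ)
    (Y X Z : Ω → ℝ) (hY : Measurable Y) (hX : Measurable X) (hZ : Measurable Z)
    (hYlaw : Measure.map Y ℙ = gammaMeasure m (((c : ℝ) - 1) * μ))
    (hXlaw : Measure.map X ℙ = expMeasure μ)
    (hZlaw : Measure.map Z ℙ = expMeasure μ)
    (hindep : iIndepFun ![Y, X, Z] ℙ) :
    ∫ ω, Real.exp (-α * min (Y ω + X ω) (Z ω)) ∂ℙ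
      = (η * (((c : ℝ) - 1) / (η + c)) ^ m + η + 2) / (η ^ 2 + 3 * η + 2) := by
  have hc1 : (1:ℝ) ≤ (c:ℝ) - 1 := by
    have : (2:ℝ) ≤ (c:ℝ) := by exact_mod_cast hc
    linarith
  set r : ℝ := ((c:ℝ) - 1) * μ with hr_def
  set β : ℝ := α + μ with hβ_def
  have hr : 0 < r := by positivity
  have hβ : 0 < β := by positivity
  set T : Ω → ℝ := Y + X with hT_def
  have hT : Measurable T := hY.add hX
  have hmeas : ∀ i, Measurable (![Y, X, Z] i) := by
    intro i; fin_cases i <;> simpa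
  -- independence facts
  have hTZ : IndepFun T Z ℙ := by
    have h := hindep.indepFun_add_left hmeas 0 1 2 (by decide) (by decide)
    simpa using h
  have hYX : IndepFun Y X ℙ := hindep.indepFun (show (0 : Fin 3) ≠ 1 by decide)
  -- a.e. nonnegativity
  have hY0 : ∀ᵐ ω, 0 ≤ Y ω := ae_nonneg_of_gamma_law hY hYlaw
  have hX0 : ∀ᵐ ω, 0 ≤ X ω := ae_nonneg_of_gamma_law hX hXlaw
  have hZ0 : ∀ᵐ ω, 0 ≤ Z ω := ae_nonneg_of_gamma_law hZ hZlaw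
  have hT0 : ∀ᵐ ω, 0 ≤ T ω := by
    filter_upwards [hY0, hX0] with ω h1 h2
    exact add_nonneg h1 h2
  have hmapT_Iio : Measure.map T ℙ (Iio 0) = 0 := by
    rw [Measure.map_apply hT measurableSet_Iio]
    have h : T ⁻¹' (Iio 0) = {ω | ¬ 0 ≤ T ω} := by ext ω; simp [not_le]
    rw [h, ← ae_iff]
    exact hT0
  -- instances
  have instT : IsProbabilityMeasure (Measure.map T ℙ) := Measure.isProbabilityMeasure_map hT.aemeasurable
  have instE : IsProbabilityMeasure (expMeasure μ) := isProbabilityMeasure_expMeasure hμ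
  -- the joint law
  have hmapTZ : Measure.map (fun ω => (T ω, Z ω)) ℙ
      = (Measure.map T ℙ).prod (expMeasure μ) := by
    rw [← hZlaw]
    exact (indepFun_iff_map_prod_eq_prod_map_map hT.aemeasurable hZ.aemeasurable).mp hTZ
  have hgc : Continuous (fun p : ℝ × ℝ => Real.exp (-α * min p.1 p.2)) := by fun_prop
  have step1 : ∫ ω, Real.exp (-α * min (Y ω + X ω) (Z ω)) ∂ℙ
      = ∫ p : ℝ × ℝ, Real.exp (-α * min p.1 p.2)
          ∂((Measure.map T ℙ).prod (expMeasure μ)) := by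
    rw [← hmapTZ, integral_map (hT.prodMk hZ).aemeasurable hgc.aestronglyMeasurable]
    rfl
  rw [step1]
  -- integrability on the product
  have haeprod1 : ∀ᵐ p ∂((Measure.map T ℙ).prod (expMeasure μ)), 0 ≤ p.1 := by
    rw [ae_iff]
    have h : {p : ℝ × ℝ | ¬ 0 ≤ p.1} = (Iio 0) ×ˢ (univ : Set ℝ) := by
      ext p; simp [not_le]
    rw [h, Measure.prod_prod, hmapT_Iio, zero_mul]
  have haeprod2 : ∀ᵐ p ∂((Measure.map T ℙ).prod (expMeasure μ)), 0 ≤ p.2 := by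
    rw [ae_iff]
    have h : {p : ℝ × ℝ | ¬ 0 ≤ p.2} = (univ : Set ℝ) ×ˢ (Iio 0) := by
      ext p; simp [not_le]
    rw [h, Measure.prod_prod, expMeasure, gammaMeasure_Iio_zero, mul_zero]
  have hint : Integrable (fun p : ℝ × ℝ => Real.exp (-α * min p.1 p.2))
      ((Measure.map T ℙ).prod (expMeasure μ)) := by
    refine Integrable.mono' (integrable_const 1) hgc.aestronglyMeasurable ?_
    filter_upwards [haeprod1, haeprod2] with p h1 h2
    rw [Real.norm_eq_abs, abs_of_pos (Real.exp_pos _), ← Real.exp_zero]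
    apply Real.exp_le_exp.mpr
    have hmin : 0 ≤ min p.1 p.2 := le_min h1 h2
    nlinarith
  rw [MeasureTheory.integral_prod _ hint]
  -- the inner integral
  have haeT : ∀ᵐ t ∂(Measure.map T ℙ), 0 ≤ t := by
    rw [ae_iff]
    have h : {t : ℝ | ¬ 0 ≤ t} = Iio 0 := by ext t; simp [not_le]
    rw [h]; exact hmapT_Iio
  have step2 : ∫ t, (∫ z, Real.exp (-α * min t z) ∂(expMeasure μ)) ∂(Measure.map T ℙ)
      = ∫ t, (μ/(α+μ) + α/(α+μ) * Real.exp (-(β*t))) ∂(Measure.map T ℙ) := by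
    refine integral_congr_ae ?_
    filter_upwards [haeT] with t ht
    rw [inner_int hμ hα ht]
  rw [step2]
  have hexpint : Integrable (fun t => Real.exp (-(β*t))) (Measure.map T ℙ) := by
    refine Integrable.mono' (integrable_const 1) ?_ ?_
    · exact (Real.continuous_exp.comp (by fun_prop)).aestronglyMeasurable
    · filter_upwards [haeT] with t ht
      rw [Real.norm_eq_abs, abs_of_pos (Real.exp_pos _), ← Real.exp_zero]
      apply Real.exp_le_exp.mpr
      nlinarith
  rw [integral_add (integrable_const _) (hexpint.const_mul _), integral_const,
    integral_const_mul]
  simp only [probReal_univ, measure_univ, ENNReal.toReal_one, smul_eq_mul, one_mul]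
  -- evaluate ∫ exp(-(β t)) dmapT via independence
  have hφ : Measurable (fun y : ℝ => Real.exp (-(β*y))) := by fun_prop
  have stepT : ∫ t, Real.exp (-(β*t)) ∂(Measure.map T ℙ)
      = (∫ ω, Real.exp (-(β * Y ω)) ∂ℙ) * (∫ ω, Real.exp (-(β * X ω)) ∂ℙ) := by
    rw [integral_map hT.aemeasurable hφ.aestronglyMeasurable]
    have h1 : (fun ω => Real.exp (-(β * T ω)))
        = fun ω => Real.exp (-(β * Y ω)) * Real.exp (-(β * X ω)) := by
      funext ω
      rw [← Real.exp_add]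
      congr 1
      show -(β * (Y ω + X ω)) = -(β * Y ω) + -(β * X ω)
      ring
    rw [h1]
    exact (hYX.comp hφ hφ).integral_mul_eq_mul_integral
      ((hφ.comp hY).aestronglyMeasurable) ((hφ.comp hX).aestronglyMeasurable)
  have hmgfY : ∫ ω, Real.exp (-(β * Y ω)) ∂ℙ = (r/(r+β))^m := by
    rw [← gamma_mgf m hm hr hβ.le, ← hYlaw,
      integral_map hY.aemeasurable hφ.aestronglyMeasurable]
  have hmgfX : ∫ ω, Real.exp (-(β * X ω)) ∂ℙ = μ/(μ+β) := by
    rw [← exp_mgf hμ hβ.le, ← hXlaw,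
      integral_map hX.aemeasurable hφ.aestronglyMeasurable]
  rw [stepT, hmgfY, hmgfX]
  -- final algebra
  have hbase : r/(r+β) = ((c:ℝ) - 1)/(η + c) := by
    rw [hη, hr_def, hβ_def]
    have h1 : α/μ + (c:ℝ) ≠ 0 := by positivity
    field_simp
    ring
  rw [hbase, hη]
  have h1 : α/μ + 1 ≠ 0 := by positivity
  have h2 : (α/μ)^2 + 3*(α/μ) + 2 ≠ 0 := by positivity
  have h3 : μ + β ≠ 0 := by positivity
  have h4 : α + μ ≠ 0 := by positivity
  rw [hβ_def]
  field_simp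
  ring
end

section
/- Let c ≥ 1 be an integer, 0 < ρ < 1, and η > 0. Define C(c,ρ) = ((cρ)^c/((1−ρ)·c!)) / ( Σ_{s=0}^{c−1} (cρ)^s/s! + (cρ)^c/((1−ρ)·c!) ); π(s) = (c!·(1−ρ)/(s!·(cρ)^{c−s}))·C(c,ρ) for 0 ≤ s ≤ c and π(s) = (1−ρ)·ρ^{s−c}·C(c,ρ) for s > c; and for 1 ≤ i ≤ s define w(s,i) = 2/(η+2) if s < c; w(s,i) = ( η·((c−1)/(η+c))^{s−c+1} + η + 2 )/(η²+3η+2) if i ≤ c ≤ s; and w(s,i) = (c/(η+c))^{i−c} · ( η·((c−1)/(η+c))^{s−i+1} + η + 2 )/(η²+3η+2) if c < i ≤ s. Then 2·( Σ_{s=0}^{∞} s·π(s) − Σ_{s=0}^{∞} π(s)·Σ_{i=1}^{s} w(s,i) ) = 2·( (ρ/(1−ρ))·C(c,ρ) + cρ − (1/(η+2))·( C(c,ρ)·(2cρ − cη)/(η + c − cρ) + 2cρ ) ). -/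
open Finset

private lemma geom_aux1 (q b c : ℝ) (h : b * c + q = c * q) :
    ∀ k : ℕ, ∑ j ∈ Finset.Ioc 0 k, q ^ j * b ^ (k - j) = c * (q ^ k - b ^ k) := by
  intro k
  induction k with
  | zero => simp
  | succ n ih =>
    rw [← Finset.Icc_add_one_left_eq_Ioc, Finset.sum_Icc_succ_top (by omega)]
    rw [Finset.sum_congr rfl (g := fun j => b * (q ^ j * b ^ (n - j)))
      (fun j hj => by
        rw [Finset.Icc_add_one_left_eq_Ioc, Finset.mem_Ioc] at hj
        rw [show n + 1 - j = (n - j) + 1 by omega, pow_succ]; ring)]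
    rw [← Finset.mul_sum, Finset.Icc_add_one_left_eq_Ioc, ih]
    simp only [Nat.sub_self, pow_zero, mul_one]
    linear_combination (q ^ n) * h

private lemma geom_aux2 (q c η : ℝ) (h : c * (1 - q) = η * q) :
    ∀ k : ℕ, η * ∑ j ∈ Finset.Ioc 0 k, q ^ j = c * (1 - q ^ k) := by
  intro k
  induction k with
  | zero => simp
  | succ n ih =>
    rw [← Finset.Icc_add_one_left_eq_Ioc, Finset.sum_Icc_succ_top (by omega), Finset.Icc_add_one_left_eq_Ioc]
    linear_combination ih - (q ^ n) * h

private lemma Ckey_aux (S Y d C : ℝ) (hd : 0 < d) (hS : 0 ≤ S) (hY : 0 < Y)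
    (hC : C = (Y / d) / (S + Y / d)) : C * S * d = (1 - C) * Y := by
  have h1 : 0 < S + Y / d := by positivity
  rw [hC]
  field_simp
  ring

set_option maxHeartbeats 1000000 in
/-- The series evaluation constituting Proposition 3 (M/M/c value of `R₀ˢʸˢ`):
`2(Σ s·π(s) − Σ π(s)·Σ_{i=1}^s w(s,i)) = 2((ρ/(1−ρ))C + cρ − (1/(η+2))(C(2cρ−cη)/(η+c−cρ) + 2cρ))`. -/
theorem stmt_11 (c : ℕ) (hc : 1 ≤ c) (ρ η : ℝ) (hρ0 : 0 < ρ) (hρ1 : ρ < 1) (hη : 0 < η)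
    (C : ℝ)
    (hC : C = ((c * ρ) ^ c / ((1 - ρ) * (Nat.factorial c))) /
        ((∑ s ∈ Finset.range c, (c * ρ) ^ s / (Nat.factorial s)) +
          (c * ρ) ^ c / ((1 - ρ) * (Nat.factorial c))))
    (π : ℕ → ℝ)
    (hπle : ∀ s : ℕ, s ≤ c →
      π s = ((Nat.factorial c : ℝ) * (1 - ρ) / ((Nat.factorial s) * (c * ρ) ^ (c - s))) * C)
    (hπgt : ∀ s : ℕ, c < s → π s = (1 - ρ) * ρ ^ (s - c) * C)
    (w : ℕ → ℕ → ℝ)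
    (hw1 : ∀ s i : ℕ, 1 ≤ i → i ≤ s → s < c → w s i = 2 / (η + 2))
    (hw2 : ∀ s i : ℕ, 1 ≤ i → i ≤ c → c ≤ s →
      w s i = (η * (((c : ℝ) - 1) / (η + c)) ^ (s - c + 1) + η + 2) / (η ^ 2 + 3 * η + 2))
    (hw3 : ∀ s i : ℕ, c < i → i ≤ s →
      w s i = ((c : ℝ) / (η + c)) ^ (i - c) *
        ((η * (((c : ℝ) - 1) / (η + c)) ^ (s - i + 1) + η + 2) / (η ^ 2 + 3 * η + 2))) :
    2 * ((∑' s : ℕ, (s : ℝ) * π s) - ∑' s : ℕ, π s * ∑ i ∈ Finset.Icc 1 s, w s i)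
      = 2 * ((ρ / (1 - ρ)) * C + c * ρ -
          (1 / (η + 2)) * (C * ((2 * c * ρ - c * η) / (η + c - c * ρ)) + 2 * c * ρ)) := by
  have hc0 : (0:ℝ) < c := by exact_mod_cast Nat.pos_of_ne_zero (by omega)
  have hc1 : (1:ℝ) ≤ c := by exact_mod_cast hc
  have h1ρ : (0:ℝ) < 1 - ρ := by linarith
  have ha : (0:ℝ) < (c:ℝ) * ρ := by positivity
  have hηc : (0:ℝ) < η + c := by linarith
  have hη2 : (0:ℝ) < η + 2 := by linarith
  have hD0 : (0:ℝ) < η^2 + 3*η + 2 := by nlinarith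
  have hfa : ∀ s : ℕ, (0:ℝ) < (Nat.factorial s : ℝ) := fun s => by
    exact_mod_cast s.factorial_pos
  -- π on the tail
  have hπtail : ∀ k : ℕ, π (c + k) = (1 - ρ) * ρ ^ k * C := by
    intro k
    cases k with
    | zero =>
      rw [Nat.add_zero, hπle c le_rfl, Nat.sub_self, pow_zero, pow_zero]
      rw [mul_one, mul_one]
      rw [mul_comm ((Nat.factorial c : ℝ)) (1 - ρ), mul_div_assoc,
        div_self (ne_of_gt (hfa c)), mul_one]
    | succ n =>
      rw [hπgt (c + (n+1)) (by omega), show c + (n+1) - c = n + 1 by omega]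
  -- the key consequence of the definition of C
  have hCkey : C * (∑ s ∈ Finset.range c, ((c:ℝ) * ρ) ^ s / (Nat.factorial s))
        * ((1 - ρ) * (Nat.factorial c : ℝ))
      = (1 - C) * ((c:ℝ) * ρ)^c := by
    refine Ckey_aux _ _ _ _ (by positivity)
      (Finset.sum_nonneg fun s _ => by positivity) (by positivity) hC
  -- value of π below c
  have hπval : ∀ s ∈ Finset.range c,
      π s = ((Nat.factorial c : ℝ) * (1 - ρ) * C / ((c:ℝ)*ρ)^c)
        * (((c:ℝ)*ρ)^s / (Nat.factorial s)) := by
    intro s hs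
    rw [Finset.mem_range] at hs
    rw [hπle s hs.le,
      show ((c:ℝ)*ρ)^c = ((c:ℝ)*ρ)^(c-s) * ((c:ℝ)*ρ)^s by rw [← pow_add]; congr 1; omega]
    have h2 : (((c:ℝ)*ρ))^(c-s) ≠ 0 := by positivity
    have h3 : (((c:ℝ)*ρ))^s ≠ 0 := by positivity
    field_simp
  -- sum of π below c
  have hsum_lt : ∑ s ∈ Finset.range c, π s = 1 - C := by
    rw [Finset.sum_congr rfl hπval, ← Finset.mul_sum]
    have h3 : (((c:ℝ)*ρ))^c ≠ 0 := by positivity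
    have h4 : (Nat.factorial c : ℝ) ≠ 0 := (hfa c).ne'
    generalize hSg : (∑ s ∈ Finset.range c, ((c:ℝ)*ρ)^s / (Nat.factorial s)) = S at hCkey ⊢
    field_simp
    linear_combination hCkey
  -- sum of s * π s up to c
  have hstep : ∀ s ∈ Finset.range c, ((s:ℝ)+1) * π (s+1) = ((c:ℝ)*ρ) * π s := by
    intro s hs
    rw [Finset.mem_range] at hs
    rw [hπle (s+1) hs, hπle s hs.le,
      show ((c:ℝ)*ρ)^(c-s) = ((c:ℝ)*ρ)^(c-(s+1)) * ((c:ℝ)*ρ) by rw [← pow_succ]; congr 1; omega,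
      Nat.factorial_succ]
    have h2 : ((c:ℝ)*ρ)^(c-(s+1)) ≠ 0 := by positivity
    push_cast
    field_simp
  have hsum_id : ∑ s ∈ Finset.range (c+1), (s:ℝ) * π s = ((c:ℝ)*ρ) * (1 - C) := by
    rw [Finset.sum_range_succ']
    simp only [Nat.cast_zero, zero_mul, add_zero]
    rw [Finset.sum_congr rfl (fun s hs => by push_cast; exact hstep s hs), ← Finset.mul_sum,
      hsum_lt]
  have hπc : π c = (1-ρ)*C := by simpa using hπtail 0
  have hrange_c : ∑ s ∈ Finset.range c, (s:ℝ) * π s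
      = (c:ℝ)*ρ*(1-C) - (c:ℝ)*((1-ρ)*C) := by
    have h := Finset.sum_range_succ (fun s => (s:ℝ) * π s) c
    rw [hsum_id, hπc] at h
    linarith [h]
  -- first tsum
  have hρn : ‖ρ‖ < 1 := by rw [Real.norm_eq_abs, abs_of_pos hρ0]; exact hρ1
  have hgeo : Summable fun k : ℕ => ρ ^ k := summable_geometric_of_lt_one hρ0.le hρ1
  have hkgeo : Summable fun k : ℕ => (k:ℝ) * ρ ^ k := by
    have := summable_pow_mul_geometric_of_norm_lt_one 1 hρn
    simpa using this
  have htailval : ∀ k : ℕ, ((k + c : ℕ):ℝ) * π (k + c)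
      = (1-ρ)*C*((k:ℝ)*ρ^k) + (1-ρ)*C*(c:ℝ)*ρ^k := by
    intro k
    rw [show k + c = c + k by omega, hπtail k]
    push_cast
    ring
  have hsf : Summable fun s : ℕ => (s:ℝ) * π s := by
    rw [← summable_nat_add_iff c]
    exact Summable.congr ((hkgeo.mul_left _).add (hgeo.mul_left _))
      (fun k => (htailval k).symm)
  have htA : ∑' k : ℕ, ((k + c : ℕ):ℝ) * π (k + c)
      = (1-ρ)*C*(ρ/(1-ρ)^2) + (1-ρ)*C*(c:ℝ)*(1-ρ)⁻¹ := by
    rw [tsum_congr htailval, Summable.tsum_add (hkgeo.mul_left _) (hgeo.mul_left _),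
      tsum_mul_left, tsum_mul_left, tsum_geometric_of_lt_one hρ0.le hρ1,
      tsum_coe_mul_geometric_of_norm_lt_one hρn]
  have htsum1 : ∑' s : ℕ, (s:ℝ) * π s = (c:ℝ)*ρ + ρ*C/(1-ρ) := by
    rw [← Summable.sum_add_tsum_nat_add c hsf, hrange_c, htA]
    field_simp
    ring
  -- inner sums of w below c
  have hwlt : ∀ s : ℕ, s < c → ∑ i ∈ Finset.Icc 1 s, w s i = (s:ℝ) * (2/(η+2)) := by
    intro s hs
    have hcg : ∑ i ∈ Finset.Icc 1 s, w s i = ∑ _i ∈ Finset.Icc 1 s, (2/(η+2)) := by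
      refine Finset.sum_congr rfl fun i hi => ?_
      rw [Finset.mem_Icc] at hi
      exact hw1 s i hi.1 hi.2 hs
    rw [hcg, Finset.sum_const, Nat.card_Icc]
    simp [nsmul_eq_mul]
  -- abbreviations
  set Q : ℝ := (c:ℝ)/(η+c) with hQ
  set B : ℝ := ((c:ℝ)-1)/(η+c) with hB
  have hQ0 : (0:ℝ) ≤ Q := by rw [hQ]; positivity
  have hQ1 : Q < 1 := by rw [hQ, div_lt_one hηc]; linarith
  have hqb : B * (c:ℝ) + Q = (c:ℝ) * Q := by rw [hQ, hB]; field_simp; ring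
  have hq2 : (c:ℝ) * (1 - Q) = η * Q := by rw [hQ]; field_simp; ring
  set M : ℝ := (c:ℝ)*(((c:ℝ)-2)*η - 2*(c:ℝ))/(η*(η+2)*(η+c)) with hM
  -- inner sums of w at/above c
  have hinner : ∀ k : ℕ, ∑ i ∈ Finset.Icc 1 (c + k), w (c + k) i = (c:ℝ)/η + M * Q^k := by
    intro k
    have hgeom2k : ∑ j ∈ Finset.Ioc 0 k, Q^j = (c:ℝ)/η * (1 - Q^k) := by
      have h := geom_aux2 Q (c:ℝ) η hq2 k
      rw [div_mul_eq_mul_div, eq_div_iff hη.ne']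
      linear_combination h
    have h1 : ∑ i ∈ Finset.Ioc 0 c, w (c+k) i
        = (c:ℝ) * ((η * (B^k * B) + η + 2)/(η^2+3*η+2)) := by
      have hcg : ∑ i ∈ Finset.Ioc 0 c, w (c+k) i
          = ∑ _i ∈ Finset.Ioc 0 c, ((η * B ^ (k+1) + η + 2) / (η^2+3*η+2)) := by
        refine Finset.sum_congr rfl fun i hi => ?_
        rw [Finset.mem_Ioc] at hi
        rw [hw2 (c+k) i hi.1 hi.2 (Nat.le_add_right c k), show c + k - c = k by omega]
      rw [hcg, Finset.sum_const, Nat.card_Ioc, pow_succ]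
      simp [nsmul_eq_mul]
    have h2 : ∑ i ∈ Finset.Ioc c (c+k), w (c+k) i
        = (η*B/(η^2+3*η+2)) * ((c:ℝ) * (Q^k - B^k))
          + ((η+2)/(η^2+3*η+2)) * ((c:ℝ)/η * (1 - Q^k)) := by
      have hmap : Finset.Ioc c (c+k) = Finset.map (addLeftEmbedding c) (Finset.Ioc 0 k) := by
        rw [Finset.map_add_left_Ioc]; simp
      rw [hmap, Finset.sum_map]
      have hterm : ∀ j ∈ Finset.Ioc 0 k,
          w (c+k) (addLeftEmbedding c j)
            = (η*B/(η^2+3*η+2)) * (Q^j * B^(k-j)) + ((η+2)/(η^2+3*η+2)) * Q^j := by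
        intro j hj
        rw [Finset.mem_Ioc] at hj
        rw [addLeftEmbedding_apply,
          hw3 (c+k) (c+j) (by omega) (by omega),
          show c + j - c = j by omega, show c + k - (c + j) + 1 = (k - j) + 1 by omega,
          pow_succ]
        ring
      rw [Finset.sum_congr rfl hterm, Finset.sum_add_distrib, ← Finset.mul_sum, ← Finset.mul_sum,
        geom_aux1 Q B (c:ℝ) hqb k, hgeom2k]
    rw [show Finset.Icc 1 (c+k) = Finset.Ioc 0 (c+k) from Finset.Icc_add_one_left_eq_Ioc 0 (c+k),
      ← Finset.sum_Ioc_consecutive _ (Nat.zero_le c) (Nat.le_add_right c k), h1, h2]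
    generalize B ^ k = Bk
    generalize Q ^ k = Qk
    rw [hM, hB]
    field_simp
    ring
  -- tail of the second series
  have hρQ0 : (0:ℝ) ≤ ρ * Q := mul_nonneg hρ0.le hQ0
  have hρQ1 : ρ * Q < 1 := by nlinarith
  have hg_tail : ∀ k : ℕ, π (k + c) * ∑ i ∈ Finset.Icc 1 (k + c), w (k + c) i
      = (1-ρ)*C*((c:ℝ)/η)*ρ^k + ((1-ρ)*C*M)*(ρ*Q)^k := by
    intro k
    rw [show k + c = c + k by omega, hπtail k, hinner k, mul_pow]
    ring
  have hsg : Summable (fun s : ℕ => π s * ∑ i ∈ Finset.Icc 1 s, w s i) := by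
    rw [← summable_nat_add_iff c]
    exact Summable.congr ((hgeo.mul_left _).add
      ((summable_geometric_of_lt_one hρQ0 hρQ1).mul_left _)) (fun k => (hg_tail k).symm)
  have htB : ∑' k : ℕ, π (k + c) * ∑ i ∈ Finset.Icc 1 (k + c), w (k + c) i
      = (1-ρ)*C*((c:ℝ)/η)*(1-ρ)⁻¹ + ((1-ρ)*C*M)*(1-ρ*Q)⁻¹ := by
    rw [tsum_congr hg_tail, Summable.tsum_add (hgeo.mul_left _)
      ((summable_geometric_of_lt_one hρQ0 hρQ1).mul_left _), tsum_mul_left, tsum_mul_left,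
      tsum_geometric_of_lt_one hρ0.le hρ1, tsum_geometric_of_lt_one hρQ0 hρQ1]
  have hgrange : ∑ s ∈ Finset.range c, π s * ∑ i ∈ Finset.Icc 1 s, w s i
      = ((c:ℝ)*ρ*(1-C) - (c:ℝ)*((1-ρ)*C)) * (2/(η+2)) := by
    have hcg : ∑ s ∈ Finset.range c, π s * ∑ i ∈ Finset.Icc 1 s, w s i
        = ∑ s ∈ Finset.range c, ((s:ℝ) * π s) * (2/(η+2)) := by
      refine Finset.sum_congr rfl fun s hs => ?_
      rw [hwlt s (Finset.mem_range.mp hs)]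
      ring
    rw [hcg, ← Finset.sum_mul, hrange_c]
  have htsum2 : ∑' s : ℕ, π s * ∑ i ∈ Finset.Icc 1 s, w s i
      = ((c:ℝ)*ρ*(1-C) - (c:ℝ)*((1-ρ)*C)) * (2/(η+2))
        + ((1-ρ)*C*((c:ℝ)/η)*(1-ρ)⁻¹ + ((1-ρ)*C*M)*(1-ρ*Q)⁻¹) := by
    rw [← Summable.sum_add_tsum_nat_add c hsg, hgrange, htB]
  -- final algebra
  have h5 : (0:ℝ) < η + (c:ℝ) - (c:ℝ)*ρ := by nlinarith
  have hinv : (1 - ρ*Q)⁻¹ = (η+(c:ℝ))/(η+(c:ℝ)-(c:ℝ)*ρ) := by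
    rw [hQ, show 1 - ρ*((c:ℝ)/(η+(c:ℝ))) = (η+(c:ℝ)-(c:ℝ)*ρ)/(η+(c:ℝ)) by
      field_simp, inv_div]
  rw [htsum1, htsum2, hinv, hM]
  field_simp
  ring
end
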